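/- Let 0 < α < 1 and 0 < τ < 1, let x ∈ ℝ and t > √τ·|x|. For R > 0 and φ ∈ [π/2, π] set h(R, φ) = √( (1 + τ·R^α·e^{iαφ}) / (1 + R^α·e^{iαφ}) ). Then lim_{R → ∞} ∫_{π/2}^{π} |h(R, φ)| · exp( −|x|·R·Re( e^{iφ}·h(R, φ) ) + R·t·cos φ ) dφ = 0. -/

import Mathlib

open Real Complex Filter MeasureTheory

private lemma expImulre (θ : ℝ) : (Complex.exp (Complex.I * (θ:ℂ))).re = Real.cos θ := by
  simp [Complex.exp_re, Complex.mul_re, Complex.mul_im]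

private lemma expImulim (θ : ℝ) : (Complex.exp (Complex.I * (θ:ℂ))).im = Real.sin θ := by
  simp [Complex.exp_im, Complex.mul_re, Complex.mul_im]

private lemma q_im_neg (τ : ℝ) (hτ1 : τ < 1) (w : ℂ) (hw : 0 < w.im) :
    ((1 + (τ:ℂ) * w) / (1 + w)).im < 0 := by
  have h1 : (1 + w) ≠ 0 := fun h => by
    have : (1 + w).im = 0 := by rw [h]; simp
    simp at this; linarith
  have hns : 0 < Complex.normSq (1 + w) := Complex.normSq_pos.mpr h1
  have : ((1 + (τ:ℂ) * w) / (1 + w)).im = (τ - 1) * w.im / Complex.normSq (1 + w) := by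
    rw [Complex.div_im]
    simp [Complex.normSq_apply, Complex.mul_im, Complex.mul_re]
    ring
  rw [this]
  exact div_neg_of_neg_of_pos (mul_neg_of_neg_of_pos (by linarith) hw) hns

private lemma sqrt_im_nonpos (q : ℂ) (hq : q.im < 0) : (q ^ (1/2 : ℂ)).im ≤ 0 := by
  have h2 : (1/2 : ℂ) = ((1/2 : ℝ) : ℂ) := by norm_num
  rw [h2, Complex.cpow_ofReal_im]
  apply mul_nonpos_of_nonneg_of_nonpos
  · positivity
  · apply Real.sin_nonpos_of_nonpos_of_neg_pi_le
    · have := Complex.arg_neg_iff.mpr hq; linarith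
    · have := Complex.neg_pi_lt_arg q; linarith [Real.pi_pos]

private lemma abs_sqrt (q : ℂ) (hq : q ≠ 0) :
    ‖q ^ (1/2 : ℂ)‖ = Real.sqrt ‖q‖ := by
  rw [Complex.norm_cpow_of_ne_zero hq, Real.sqrt_eq_rpow]
  norm_num


private lemma abs_q_le (τ : ℝ) (hτ0 : 0 < τ) (hτ1 : τ < 1) (w : ℂ) (h1w : 1 + w ≠ 0)
    (m : ℝ) (hm : 0 < m) (hmw : m ≤ ‖1 + w‖) :
    ‖(1 + (τ:ℂ) * w) / (1 + w)‖ ≤ τ + (1 - τ) / m := by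
  have hqeq : (1 + (τ:ℂ) * w) / (1 + w) = (τ:ℂ) + ((1 - τ : ℝ) : ℂ) * (1 + w)⁻¹ := by
    field_simp
    push_cast; ring
  rw [hqeq]
  refine (norm_add_le _ _).trans ?_
  rw [norm_mul, norm_inv]
  simp only [Complex.norm_real, Real.norm_eq_abs]
  rw [abs_of_pos hτ0, abs_of_pos (by linarith : (0:ℝ) < 1 - τ)]
  have h0 : 0 < ‖1 + w‖ := lt_of_lt_of_le hm hmw
  have h1 : (1 - τ) / ‖1 + w‖ ≤ (1 - τ) / m :=
    div_le_div_of_nonneg_left (by linarith) hm hmw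
  rw [div_eq_mul_inv] at h1
  linarith

set_option maxHeartbeats 1600000 in
theorem large_arc_integral_tendsto_zero
    (α τ : ℝ) (hα0 : 0 < α) (hα1 : α < 1) (hτ0 : 0 < τ) (hτ1 : τ < 1)
    (x t : ℝ) (ht : Real.sqrt τ * |x| < t)
    (h : ℝ → ℝ → ℂ)
    (hh : ∀ R φ : ℝ, h R φ =
      ((1 + (τ : ℂ) * ((R ^ α : ℝ) : ℂ) * Complex.exp (Complex.I * (α * φ : ℝ))) /
        (1 + ((R ^ α : ℝ) : ℂ) * Complex.exp (Complex.I * (α * φ : ℝ)))) ^ (1/2 : ℂ)) :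
    Tendsto
      (fun R : ℝ => ∫ φ in (Real.pi / 2)..Real.pi,
        ‖h R φ‖ *
          Real.exp (-(|x| * R * (Complex.exp (Complex.I * (φ : ℝ)) * h R φ).re)
            + R * t * Real.cos φ))
      atTop (nhds 0) := by
  have hπ : Real.pi / 2 ≤ Real.pi := by linarith [Real.pi_pos]
  obtain ⟨c, hcdef⟩ : ∃ c : ℝ, c = t - Real.sqrt τ * |x| := ⟨_, rfl⟩
  have hc : 0 < c := by rw [hcdef]; linarith
  obtain ⟨ε, hεdef⟩ : ∃ ε : ℝ, ε = c / (2 * (|x| + 1)) := ⟨_, rfl⟩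
  have hε : 0 < ε := by rw [hεdef]; positivity
  obtain ⟨B, hBdef⟩ : ∃ B : ℝ, B = Real.sqrt τ + ε := ⟨_, rfl⟩
  have hB : 0 < B := by rw [hBdef]; positivity
  have hεx : ε * |x| ≤ c / 2 := by
    rw [hεdef, div_mul_eq_mul_div, div_le_div_iff₀ (by positivity) (by norm_num)]
    nlinarith [abs_nonneg x]
  have hBx : B * |x| < t := by
    have : B * |x| = Real.sqrt τ * |x| + ε * |x| := by rw [hBdef]; ring
    rw [this]; linarith
  obtain ⟨c', hc'def⟩ : ∃ c' : ℝ, c' = t - B * |x| := ⟨_, rfl⟩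
  have hc' : 0 < c' := by rw [hc'def]; linarith
  -- key pointwise bound
  have key : ∀ R φ : ℝ, 0 < R → 1 + (1 - τ) / ε ^ 2 ≤ R ^ α →
      φ ∈ Set.Icc (Real.pi / 2) Real.pi →
      ‖h R φ‖ *
        Real.exp (-(|x| * R * (Complex.exp (Complex.I * (φ : ℝ)) * h R φ).re)
          + R * t * Real.cos φ) ≤ B * Real.exp (R * c' * Real.cos φ) := by
    intro R φ hR hRα hφ
    obtain ⟨hφ1, hφ2⟩ := hφ
    have hπ2 : 0 < Real.pi / 2 := by positivity
    obtain ⟨w, hwdef⟩ : ∃ w : ℂ,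
        ((R ^ α : ℝ) : ℂ) * Complex.exp (Complex.I * ((α * φ : ℝ) : ℂ)) = w := ⟨_, rfl⟩
    obtain ⟨q, hqdef⟩ : ∃ q : ℂ, (1 + (τ : ℂ) * w) / (1 + w) = q := ⟨_, rfl⟩
    have hhRφ : h R φ = q ^ (1/2 : ℂ) := by
      rw [hh R φ, ← hqdef, ← hwdef]; ring_nf
    have hθ1 : 0 < α * φ := mul_pos hα0 (lt_of_lt_of_le hπ2 hφ1)
    have hθ2 : α * φ < Real.pi := by
      have h1 : α * φ ≤ α * Real.pi := by nlinarith
      nlinarith [Real.pi_pos]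
    have hRα0 : (0:ℝ) < R ^ α := Real.rpow_pos_of_pos hR α
    have hwim : 0 < w.im := by
      rw [← hwdef]
      have heq : (((R ^ α : ℝ) : ℂ) * Complex.exp (Complex.I * ((α * φ : ℝ) : ℂ))).im
          = (R ^ α) * Real.sin (α * φ) := by
        rw [Complex.mul_im, expImulim (α * φ), expImulre (α * φ)]
        simp
      rw [heq]
      exact mul_pos hRα0 (Real.sin_pos_of_pos_of_lt_pi hθ1 hθ2)
    have hqim : q.im < 0 := hqdef ▸ q_im_neg τ hτ1 w hwim
    have hq0 : q ≠ 0 := fun hq => by rw [hq] at hqim; simp at hqim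
    have h1w : (1 + w) ≠ 0 := fun h1 => by
      have : (1 + w).im = 0 := by rw [h1]; simp
      simp at this; linarith
    -- |w| = R^α
    have habsw : ‖w‖ = R ^ α := by
      rw [← hwdef, norm_mul, Complex.norm_exp]
      have : (Complex.I * ((α * φ : ℝ) : ℂ)).re = 0 := by
        simp [Complex.mul_re]
      rw [this]
      simp [abs_of_pos hRα0]
    have habs1w : R ^ α - 1 ≤ ‖1 + w‖ := by
      have := norm_add_le (1 + w) (-1)
      simp only [add_neg_cancel_comm, norm_neg, norm_one] at this
      linarith [habsw ▸ this]
    have hRα1 : (1:ℝ) < R ^ α := by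
      have : (0:ℝ) < (1 - τ) / ε ^ 2 := div_pos (by linarith) (by positivity)
      linarith
    have habs1w0 : 0 < ‖1 + w‖ := by
      have : (0:ℝ) < R ^ α - 1 := by linarith
      linarith
    have habsq : ‖q‖ ≤ τ + (1 - τ) / (R ^ α - 1) := by
      rw [← hqdef]
      exact abs_q_le τ hτ0 hτ1 w h1w (R ^ α - 1) (by linarith) habs1w
    have hεq : (1 - τ) / (R ^ α - 1) ≤ ε ^ 2 := by
      rw [div_le_iff₀ (by linarith)]
      have h2 : (1 - τ) / ε ^ 2 ≤ R ^ α - 1 := by linarith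
      rw [div_le_iff₀ (by positivity)] at h2
      linarith
    have habsq2 : ‖q‖ ≤ B ^ 2 := by
      have hBsq : B ^ 2 = τ + 2 * Real.sqrt τ * ε + ε ^ 2 := by
        rw [hBdef]; rw [add_sq, Real.sq_sqrt hτ0.le]
      rw [hBsq]
      nlinarith [Real.sqrt_nonneg τ]
    have hhB : ‖h R φ‖ ≤ B := by
      rw [hhRφ, abs_sqrt q hq0]
      calc Real.sqrt ‖q‖ ≤ Real.sqrt (B ^ 2) := Real.sqrt_le_sqrt habsq2
        _ = B := Real.sqrt_sq hB.le
    have hhim : (h R φ).im ≤ 0 := by rw [hhRφ]; exact sqrt_im_nonpos q hqim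
    have hcos : Real.cos φ ≤ 0 :=
      Real.cos_nonpos_of_pi_div_two_le_of_le hφ1 (by linarith)
    have hsin : 0 ≤ Real.sin φ :=
      Real.sin_nonneg_of_nonneg_of_le_pi (by linarith) hφ2
    have hre : B * Real.cos φ ≤ (Complex.exp (Complex.I * (φ : ℝ)) * h R φ).re := by
      have hre2 : (Complex.exp (Complex.I * (φ : ℝ)) * h R φ).re
          = Real.cos φ * (h R φ).re - Real.sin φ * (h R φ).im := by
        rw [Complex.mul_re, expImulre, expImulim]
      rw [hre2]
      have h1 : Real.cos φ * B ≤ Real.cos φ * (h R φ).re :=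
        mul_le_mul_of_nonpos_left ((Complex.re_le_norm _).trans hhB) hcos
      have h2 : Real.sin φ * (h R φ).im ≤ 0 := mul_nonpos_of_nonneg_of_nonpos hsin hhim
      linarith
    have hexp : -(|x| * R * (Complex.exp (Complex.I * (φ : ℝ)) * h R φ).re)
        + R * t * Real.cos φ ≤ R * c' * Real.cos φ := by
      have h2 : |x| * R * (B * Real.cos φ) ≤
          |x| * R * (Complex.exp (Complex.I * (φ : ℝ)) * h R φ).re :=
        mul_le_mul_of_nonneg_left hre (mul_nonneg (abs_nonneg x) hR.le)
      have h3 : R * c' * Real.cos φ = R * t * Real.cos φ - |x| * R * (B * Real.cos φ) := by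
        rw [hc'def]; ring
      linarith
    exact mul_le_mul hhB (Real.exp_le_exp.mpr hexp) (Real.exp_pos _).le hB.le
  -- the dominating integral tends to 0
  have hJ : Tendsto (fun R : ℝ => ∫ φ in Set.Ioc (Real.pi / 2) Real.pi,
      B * Real.exp (R * c' * Real.cos φ)) atTop (nhds 0) := by
    have h0 : (0:ℝ) = ∫ φ in Set.Ioc (Real.pi / 2) Real.pi, (0:ℝ) := by simp
    rw [h0]
    apply MeasureTheory.tendsto_integral_filter_of_dominated_convergence (fun _ => B)
    · filter_upwards with R
      exact (Continuous.aestronglyMeasurable (by fun_prop))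
    · filter_upwards [eventually_ge_atTop (0:ℝ)] with R hR0
      filter_upwards [ae_restrict_mem measurableSet_Ioc] with φ hφ
      have hcos : Real.cos φ ≤ 0 :=
        Real.cos_nonpos_of_pi_div_two_le_of_le hφ.1.le
          (by have h2 := hφ.2; linarith [Real.pi_pos])
      have hle : R * c' * Real.cos φ ≤ 0 :=
        mul_nonpos_of_nonneg_of_nonpos (mul_nonneg hR0 hc'.le) hcos
      have : B * Real.exp (R * c' * Real.cos φ) ≤ B := by
        nlinarith [Real.exp_le_one_iff.mpr hle, Real.exp_pos (R * c' * Real.cos φ)]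
      rw [Real.norm_eq_abs, _root_.abs_of_nonneg (by positivity)]
      exact this
    · exact integrableOn_const measure_Ioc_lt_top.ne
    · filter_upwards [ae_restrict_mem measurableSet_Ioc] with φ hφ
      have hcos : Real.cos φ < 0 :=
        Real.cos_neg_of_pi_div_two_lt_of_lt hφ.1
          (by have h2 := hφ.2; linarith [Real.pi_pos])
      have hneg : c' * Real.cos φ < 0 := mul_neg_of_pos_of_neg hc' hcos
      have h1 : Tendsto (fun R : ℝ => R * (c' * Real.cos φ)) atTop atBot :=
        (tendsto_mul_const_atBot_of_neg hneg).mpr tendsto_id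
      have h2 : Tendsto (fun R : ℝ => Real.exp (R * c' * Real.cos φ)) atTop (nhds 0) := by
        simp_rw [mul_assoc]
        exact Real.tendsto_exp_atBot.comp h1
      have h3 := h2.const_mul B
      rw [mul_zero] at h3
      exact h3
  -- squeeze
  apply squeeze_zero_norm' (a := fun R : ℝ =>
    |(∫ φ in (Real.pi / 2)..Real.pi, B * Real.exp (R * c' * Real.cos φ))|)
  · filter_upwards [eventually_ge_atTop (1:ℝ),
      (tendsto_rpow_atTop hα0).eventually_ge_atTop (1 + (1 - τ) / ε ^ 2)] with R hR1 hR2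
    apply intervalIntegral.norm_integral_le_abs_of_norm_le
    · rw [Set.uIoc_of_le hπ]
      filter_upwards [ae_restrict_mem measurableSet_Ioc] with φ hφ
      rw [Real.norm_eq_abs,
        _root_.abs_of_nonneg (mul_nonneg (norm_nonneg _)
          (Real.exp_pos _).le)]
      exact key R φ (by linarith) hR2 ⟨hφ.1.le, hφ.2⟩
    · exact (Continuous.intervalIntegrable (by fun_prop) _ _)
  · have : Tendsto (fun R : ℝ => ∫ φ in (Real.pi / 2)..Real.pi,
        B * Real.exp (R * c' * Real.cos φ)) atTop (nhds 0) := by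
      simp_rw [intervalIntegral.integral_of_le hπ]
      exact hJ
    have h4 := this.abs
    rwa [abs_zero] at h4
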